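/- Let R be a commutative ring, E and F two R-modules, and let φ : E → F and φ° : F → E be crossed linear maps. Then there exists a unique linear map ψ : F → E satisfying the four equalities φ∘ψ∘φ = φ, ψ∘φ∘ψ = ψ, φ°∘φ∘ψ = φ°, and ψ∘φ∘φ° = φ°. Moreover this ψ satisfies: φ∘ψ is the projection of F onto range φ along ker φ° (it is idempotent with range equal to range φ and kernel equal to ker φ°), and ψ∘φ is the projection of E onto range φ° along ker φ. (ψ is called the generalized inverse of φ via φ°, denoted Ig(φ,φ°).) -/

import Mathlib

theorem stmt6 {R : Type*} [CommRing R] {E F : Type*}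
    [AddCommGroup E] [Module R E] [AddCommGroup F] [Module R F]
    (φ : E →ₗ[R] F) (φ' : F →ₗ[R] E)
    (h1 : IsCompl (LinearMap.range φ) (LinearMap.ker φ'))
    (h2 : IsCompl (LinearMap.ker φ) (LinearMap.range φ')) :
    (∃! ψ : F →ₗ[R] E,
      φ ∘ₗ ψ ∘ₗ φ = φ ∧ ψ ∘ₗ φ ∘ₗ ψ = ψ ∧ φ' ∘ₗ φ ∘ₗ ψ = φ' ∧ ψ ∘ₗ φ ∘ₗ φ' = φ') ∧
    (∀ ψ : F →ₗ[R] E,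
      (φ ∘ₗ ψ ∘ₗ φ = φ ∧ ψ ∘ₗ φ ∘ₗ ψ = ψ ∧ φ' ∘ₗ φ ∘ₗ ψ = φ' ∧ ψ ∘ₗ φ ∘ₗ φ' = φ') →
      ((φ ∘ₗ ψ) ∘ₗ (φ ∘ₗ ψ) = φ ∘ₗ ψ ∧
        LinearMap.range (φ ∘ₗ ψ) = LinearMap.range φ ∧
        LinearMap.ker (φ ∘ₗ ψ) = LinearMap.ker φ' ∧
        (ψ ∘ₗ φ) ∘ₗ (ψ ∘ₗ φ) = ψ ∘ₗ φ ∧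
        LinearMap.range (ψ ∘ₗ φ) = LinearMap.range φ' ∧
        LinearMap.ker (ψ ∘ₗ φ) = LinearMap.ker φ)) := by
  classical
  -- restriction of φ to range φ', as a map into range φ
  set f : ↥(LinearMap.range φ') →ₗ[R] ↥(LinearMap.range φ) :=
    (φ ∘ₗ (LinearMap.range φ').subtype).codRestrict (LinearMap.range φ)
      (fun x => ⟨x, rfl⟩) with hf
  have hfinj : Function.Injective f := by
    intro a b hab
    have h0 : φ ((a : E) - (b : E)) = 0 := by
      have := congrArg (Subtype.val) hab
      simp only [hf, LinearMap.codRestrict_apply, LinearMap.comp_apply,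
        Submodule.subtype_apply] at this
      rw [map_sub, sub_eq_zero]
      exact this
    have : (a : E) - (b : E) = 0 := by
      have hm : (a : E) - (b : E) ∈ LinearMap.ker φ ⊓ LinearMap.range φ' :=
        ⟨h0, sub_mem a.2 b.2⟩
      rw [h2.inf_eq_bot] at hm
      exact hm
    ext
    exact sub_eq_zero.mp this
  have hfsurj : Function.Surjective f := by
    rintro ⟨y, x, rfl⟩
    obtain ⟨u, v, hu, hv, huv⟩ := Submodule.codisjoint_iff_exists_add_eq.mp h2.codisjoint x
    refine ⟨⟨v, hv⟩, ?_⟩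
    ext
    simp only [hf, LinearMap.codRestrict_apply, LinearMap.comp_apply,
      Submodule.subtype_apply]
    rw [← huv, map_add, LinearMap.mem_ker.mp hu, zero_add]
    rfl
  set e := LinearEquiv.ofBijective f ⟨hfinj, hfsurj⟩ with he
  set pr : F →ₗ[R] ↥(LinearMap.range φ) :=
    (LinearMap.range φ).linearProjOfIsCompl (LinearMap.ker φ') h1 with hpr
  set ψ : F →ₗ[R] E :=
    (LinearMap.range φ').subtype ∘ₗ (e.symm : ↥(LinearMap.range φ) →ₗ[R] ↥(LinearMap.range φ')) ∘ₗ pr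
    with hψ
  -- key pointwise facts
  have hψφ' : ∀ x : ↥(LinearMap.range φ'), ψ (φ (x : E)) = (x : E) := by
    intro x
    have hmem : φ (x : E) ∈ LinearMap.range φ := ⟨x, rfl⟩
    have hp : pr (φ (x : E)) = ⟨φ (x : E), hmem⟩ :=
      Submodule.linearProjOfIsCompl_apply_left h1 ⟨φ (x : E), hmem⟩
    have hfe : e x = ⟨φ (x : E), hmem⟩ := rfl
    simp only [hψ, LinearMap.comp_apply, hp, ← hfe, LinearEquiv.coe_coe,
      LinearEquiv.symm_apply_apply, Submodule.subtype_apply]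
  have hψk : ∀ y ∈ LinearMap.ker φ', ψ y = 0 := by
    intro y hy
    have : pr y = 0 := Submodule.projectionOnto_apply_right h1 ⟨y, hy⟩
    simp [hψ, this]
  have hψmem : ∀ y : F, ψ y ∈ LinearMap.range φ' := fun y => (e.symm (pr y)).2
  -- the four equations for ψ
  have e1 : φ ∘ₗ ψ ∘ₗ φ = φ := by
    ext x
    obtain ⟨u, v, hu, hv, huv⟩ := Submodule.codisjoint_iff_exists_add_eq.mp h2.codisjoint x
    have hx : φ x = φ v := by
      rw [← huv, map_add, LinearMap.mem_ker.mp hu, zero_add]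
    simp only [LinearMap.comp_apply, hx]
    rw [hψφ' ⟨v, hv⟩]
  have e2 : ψ ∘ₗ φ ∘ₗ ψ = ψ := by
    ext y
    simp only [LinearMap.comp_apply]
    exact hψφ' ⟨ψ y, hψmem y⟩
  have e4 : ψ ∘ₗ φ ∘ₗ φ' = φ' := by
    ext y
    simp only [LinearMap.comp_apply]
    exact hψφ' ⟨φ' y, ⟨y, rfl⟩⟩
  have e3 : φ' ∘ₗ φ ∘ₗ ψ = φ' := by
    ext y
    obtain ⟨u, v, hu, hv, huv⟩ := Submodule.codisjoint_iff_exists_add_eq.mp h1.codisjoint y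
    obtain ⟨x, rfl⟩ := hu
    simp only [LinearMap.comp_apply]
    rw [← huv, map_add, map_add, hψk v hv, map_zero, add_zero]
    have : ψ (φ x) ∈ LinearMap.range φ' := hψmem _
    have hφψφ : φ (ψ (φ x)) = φ x := LinearMap.congr_fun e1 x
    rw [hφψφ, map_add, LinearMap.mem_ker.mp hv, add_zero]
  -- any ψ₂ satisfying the four equations is determined
  have huniq : ∀ ψ₂ : F →ₗ[R] E,
      (φ ∘ₗ ψ₂ ∘ₗ φ = φ ∧ ψ₂ ∘ₗ φ ∘ₗ ψ₂ = ψ₂ ∧ φ' ∘ₗ φ ∘ₗ ψ₂ = φ' ∧ ψ₂ ∘ₗ φ ∘ₗ φ' = φ') →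
      ∀ ψ₃ : F →ₗ[R] E,
      (φ ∘ₗ ψ₃ ∘ₗ φ = φ ∧ ψ₃ ∘ₗ φ ∘ₗ ψ₃ = ψ₃ ∧ φ' ∘ₗ φ ∘ₗ ψ₃ = φ' ∧ ψ₃ ∘ₗ φ ∘ₗ φ' = φ') →
      ψ₂ = ψ₃ := by
    have hker : ∀ ψ₂ : F →ₗ[R] F →ₗ[R] E, True := fun _ => trivial
    have key : ∀ ψ₂ : F →ₗ[R] E,
        (φ ∘ₗ ψ₂ ∘ₗ φ = φ ∧ ψ₂ ∘ₗ φ ∘ₗ ψ₂ = ψ₂ ∧ φ' ∘ₗ φ ∘ₗ ψ₂ = φ' ∧ ψ₂ ∘ₗ φ ∘ₗ φ' = φ') →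
        ∀ y ∈ LinearMap.ker φ', ψ₂ y = 0 := by
      rintro ψ₂ ⟨q1, q2, q3, q4⟩ y hy
      have h3 : φ' (φ (ψ₂ y)) = φ' y := LinearMap.congr_fun q3 y
      have hmem : φ (ψ₂ y) ∈ LinearMap.range φ ⊓ LinearMap.ker φ' :=
        Submodule.mem_inf.mpr ⟨⟨ψ₂ y, rfl⟩, LinearMap.mem_ker.mpr (h3.trans (LinearMap.mem_ker.mp hy))⟩
      rw [h1.inf_eq_bot] at hmem
      have : ψ₂ (φ (ψ₂ y)) = ψ₂ y := LinearMap.congr_fun q2 y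
      rw [hmem, map_zero] at this
      exact this.symm
    have keyr : ∀ ψ₂ : F →ₗ[R] E,
        (φ ∘ₗ ψ₂ ∘ₗ φ = φ ∧ ψ₂ ∘ₗ φ ∘ₗ ψ₂ = ψ₂ ∧ φ' ∘ₗ φ ∘ₗ ψ₂ = φ' ∧ ψ₂ ∘ₗ φ ∘ₗ φ' = φ') →
        ∀ z : F, ψ₂ (φ (φ' z)) = φ' z := by
      rintro ψ₂ ⟨q1, q2, q3, q4⟩ z
      exact LinearMap.congr_fun q4 z
    intro ψ₂ hq2 ψ₃ hq3
    ext y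
    obtain ⟨u, v, hu, hv, huv⟩ := Submodule.codisjoint_iff_exists_add_eq.mp h1.codisjoint y
    obtain ⟨x, rfl⟩ := hu
    obtain ⟨a, b, ha, hb, hab⟩ := Submodule.codisjoint_iff_exists_add_eq.mp h2.codisjoint x
    obtain ⟨z, rfl⟩ := hb
    have hx : φ x = φ (φ' z) := by
      rw [← hab, map_add, LinearMap.mem_ker.mp ha, zero_add]
    rw [← huv, map_add, map_add, key ψ₂ hq2 v hv, key ψ₃ hq3 v hv, hx,
      keyr ψ₂ hq2 z, keyr ψ₃ hq3 z]
  refine ⟨⟨ψ, ⟨e1, e2, e3, e4⟩, fun ψ₂ hq => huniq ψ₂ hq ψ ⟨e1, e2, e3, e4⟩⟩, ?_⟩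
  rintro χ ⟨q1, q2, q3, q4⟩
  have hχk : ∀ y ∈ LinearMap.ker φ', χ y = 0 := by
    intro y hy
    have h3 : φ' (φ (χ y)) = φ' y := LinearMap.congr_fun q3 y
    have hmem : φ (χ y) ∈ LinearMap.range φ ⊓ LinearMap.ker φ' :=
      Submodule.mem_inf.mpr ⟨⟨χ y, rfl⟩, LinearMap.mem_ker.mpr (h3.trans (LinearMap.mem_ker.mp hy))⟩
    rw [h1.inf_eq_bot] at hmem
    have : χ (φ (χ y)) = χ y := LinearMap.congr_fun q2 y
    rw [hmem, map_zero] at this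
    exact this.symm
  have Q1 : ∀ x, φ (χ (φ x)) = φ x := fun x => LinearMap.congr_fun q1 x
  have Q4 : ∀ z, χ (φ (φ' z)) = φ' z := fun z => LinearMap.congr_fun q4 z
  refine ⟨?_, ?_, ?_, ?_, ?_, ?_⟩
  · ext y
    simp only [LinearMap.comp_apply]
    rw [Q1 (χ y)]
  · apply le_antisymm
    · rintro _ ⟨y, rfl⟩
      exact ⟨χ y, rfl⟩
    · rintro _ ⟨x, rfl⟩
      exact ⟨φ x, Q1 x⟩
  · apply le_antisymm
    · intro y hy
      have h3 : φ' (φ (χ y)) = φ' y := LinearMap.congr_fun q3 y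
      have hy0 : φ (χ y) = 0 := LinearMap.mem_ker.mp hy
      rw [hy0, map_zero] at h3
      exact LinearMap.mem_ker.mpr h3.symm
    · intro y hy
      simp [LinearMap.mem_ker, hχk y hy]
  · ext x
    simp only [LinearMap.comp_apply]
    rw [Q1 x]
  · apply le_antisymm
    · rintro _ ⟨x, rfl⟩
      obtain ⟨a, b, ha, hb, hab⟩ := Submodule.codisjoint_iff_exists_add_eq.mp h2.codisjoint x
      obtain ⟨z, rfl⟩ := hb
      simp only [LinearMap.comp_apply]
      rw [← hab, map_add, LinearMap.mem_ker.mp ha, zero_add, Q4 z]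
      exact ⟨z, rfl⟩
    · rintro _ ⟨z, rfl⟩
      exact ⟨φ' z, Q4 z⟩
  · apply le_antisymm
    · intro x hx
      have h0 : φ (χ (φ x)) = φ x := Q1 x
      have hx0 : χ (φ x) = 0 := LinearMap.mem_ker.mp hx
      rw [hx0, map_zero] at h0
      exact LinearMap.mem_ker.mpr h0.symm
    · intro x hx
      simp [LinearMap.mem_ker, LinearMap.mem_ker.mp hx]
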